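/- Let G be a finite connected simple graph such that the toric ideal I_G is generated by quadratic binomials, and let T_G = {M_1,...,M_r} be the set of indispensable monomials of I_G. Then C_min = {supp(M_1),...,supp(M_r)}; that is, a subset E of {1,...,m} is a minimal element of the collection of supports of positive/negative parts of circuits if and only if E is the support of an indispensable monomial. -/

import Mathlib

open MvPolynomial

noncomputable section

/-- The exponent of the variable `t j` in the image of `x i`: it is `1` if the vertex `j`
is an endpoint of the edge `e i`, and `0` otherwise (incidence vector of the edge `e i`). -/
def incid {n m : ℕ} (e : Fin m → Sym2 (Fin n)) (i : Fin m) (j : Fin n) : ℕ :=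
  if j ∈ e i then 1 else 0

/-- The `K`-algebra homomorphism `K[x_1,…,x_m] → K[t_1,…,t_n]` sending `x i` to
`t_j t_k`, where `e i = {v_j, v_k}`. -/
def toricMap (K : Type*) [CommRing K] {n m : ℕ} (e : Fin m → Sym2 (Fin n)) :
    MvPolynomial (Fin m) K →ₐ[K] MvPolynomial (Fin n) K :=
  aeval fun i => ∏ j, X j ^ incid e i j

/-- The toric ideal `I_G` of the graph with edges `e`. -/
def toricIdeal (K : Type*) [CommRing K] {n m : ℕ} (e : Fin m → Sym2 (Fin n)) :
    Ideal (MvPolynomial (Fin m) K) :=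
  RingHom.ker (toricMap K e)

/-- A binomial is a difference of two monomials. -/
def IsBinomial {K : Type*} [CommRing K] {σ : Type*} (p : MvPolynomial σ K) : Prop :=
  ∃ u v : σ →₀ ℕ, p = monomial u 1 - monomial v 1

/-- A nonzero integer vector `u` in the kernel of the incidence matrix `M_G` is a circuit
if its support is minimal among supports of nonzero kernel elements and its coordinates
are relatively prime. -/
def IsCircuit {n m : ℕ} (e : Fin m → Sym2 (Fin n)) (u : Fin m → ℤ) : Prop :=
  u ≠ 0 ∧ (∀ j : Fin n, ∑ i, (incid e i j : ℤ) * u i = 0) ∧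
  (∀ v : Fin m → ℤ, v ≠ 0 → (∀ j : Fin n, ∑ i, (incid e i j : ℤ) * v i = 0) →
      {i | v i ≠ 0} ⊆ {i | u i ≠ 0} → {i | v i ≠ 0} = {i | u i ≠ 0}) ∧
  Finset.univ.gcd u = 1

/-- The collection `C` of subsets of `{1,…,m}` that occur as the support of the positive
or the negative part of a circuit. -/
def circuitSupports {n m : ℕ} (e : Fin m → Sym2 (Fin n)) : Set (Set (Fin m)) :=
  {E | ∃ u : Fin m → ℤ, IsCircuit e u ∧ (E = {i | 0 < u i} ∨ E = {i | u i < 0})}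

/-- `C_min`: the minimal elements, with respect to inclusion, of `circuitSupports e`. -/
def Cmin {n m : ℕ} (e : Fin m → Sym2 (Fin n)) : Set (Set (Fin m)) :=
  {E ∈ circuitSupports e | ∀ E' ∈ circuitSupports e, E' ⊆ E → E' = E}

/-- The monomial `x^u` is indispensable for the ideal `I`: every system of binomial
generators of `I` contains a binomial one of whose monomials is `x^u`. -/
def IndispensableMonomial {K : Type*} [CommRing K] {m : ℕ}
    (I : Ideal (MvPolynomial (Fin m) K)) (u : Fin m →₀ ℕ) : Prop :=
  ∀ S : Set (MvPolynomial (Fin m) K), (∀ p ∈ S, IsBinomial p) → Ideal.span S = I →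
    ∃ p ∈ S, ∃ v : Fin m →₀ ℕ,
      p = monomial u 1 - monomial v 1 ∨ p = monomial v 1 - monomial u 1

namespace ToricAux

variable {n m : ℕ}

/-- vertex-degree vector of an exponent vector -/
def piF (e : Fin m → Sym2 (Fin n)) (u : Fin m →₀ ℕ) : Fin n → ℕ :=
  fun j => ∑ i, incid e i j * u i

variable {e : Fin m → Sym2 (Fin n)}

lemma incid_le_one (i : Fin m) (j : Fin n) : incid e i j ≤ 1 := by
  unfold incid; split <;> simp

lemma incid_eq_one_iff {i : Fin m} {j : Fin n} : incid e i j = 1 ↔ j ∈ e i := by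
  unfold incid; split <;> simp_all

lemma incid_pos_iff {i : Fin m} {j : Fin n} : 0 < incid e i j ↔ j ∈ e i := by
  unfold incid; split <;> simp_all

lemma sym2_eq_of_mem_subset {z z' : Sym2 (Fin n)} (hz : ¬ z.IsDiag)
    (h : ∀ w, w ∈ z → w ∈ z') : z = z' := by
  induction z using Sym2.inductionOn with
  | hf x y =>
    induction z' using Sym2.inductionOn with
    | hf p q =>
      have hxy : x ≠ y := by simpa using hz
      have hx := h x (by simp)
      have hy := h y (by simp)
      rw [Sym2.mem_iff] at hx hy
      rcases hx with rfl | rfl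
      · rcases hy with rfl | rfl
        · exact absurd rfl hxy
        · rfl
      · rcases hy with rfl | rfl
        · exact Sym2.eq_swap
        · exact absurd rfl hxy

lemma edge_eq_of_incid {i i' : Fin m} (hl : ¬ (e i).IsDiag)
    (h : ∀ j, incid e i j = incid e i' j) : e i = e i' := by
  refine sym2_eq_of_mem_subset hl fun w hw => ?_
  have := h w
  rw [← incid_eq_one_iff] at hw ⊢
  omega

lemma piF_add (u v : Fin m →₀ ℕ) (j : Fin n) :
    piF e (u + v) j = piF e u j + piF e v j := by
  unfold piF
  rw [← Finset.sum_add_distrib]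
  refine Finset.sum_congr rfl fun i _ => by simp [mul_add]

lemma piF_single (a : Fin m) (k : ℕ) (j : Fin n) :
    piF e (Finsupp.single a k) j = k * incid e a j := by
  unfold piF
  rw [Finset.sum_eq_single a]
  · simp [mul_comm]
  · intro b _ hb; simp [Finsupp.single_apply, Ne.symm hb]
  · simp

lemma piF_zero (j : Fin n) : piF e (0 : Fin m →₀ ℕ) j = 0 := by
  simp [piF]

/-- column sum is 2 -/
lemma sum_incid (hl : ∀ i, ¬ (e i).IsDiag) (i : Fin m) :
    ∑ j, incid e i j = 2 := by
  obtain ⟨x, y, hli⟩ : ∃ x y, e i = s(x, y) := by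
    obtain ⟨⟨x, y⟩, h⟩ := (e i).exists_rep; exact ⟨x, y, h.symm⟩
  · have hxy : x ≠ y := by have := hl i; rw [hli] at this; simpa using this
    have : ∀ j, incid e i j = (if j = x then 1 else 0) + (if j = y then 1 else 0) := by
      intro j
      unfold incid
      rw [hli]
      simp only [Sym2.mem_iff]
      rcases eq_or_ne j x with rfl | h1 <;> rcases eq_or_ne j y with rfl | h2 <;> simp_all
    rw [Finset.sum_congr rfl fun j _ => this j, Finset.sum_add_distrib]
    simp [Finset.sum_ite_eq']

/-- degree identity -/
lemma sum_piF (hl : ∀ i, ¬ (e i).IsDiag) (u : Fin m →₀ ℕ) :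
    ∑ j, piF e u j = 2 * ∑ i, u i := by
  unfold piF
  rw [Finset.sum_comm]
  rw [Finset.mul_sum]
  refine Finset.sum_congr rfl fun i _ => ?_
  rw [← Finset.sum_mul, sum_incid hl]

end ToricAux
section Part2

open Finsupp

namespace ToricAux

variable {n m : ℕ} {e : Fin m → Sym2 (Fin n)}

/-- pair exponent -/
def pr (a b : Fin m) : Fin m →₀ ℕ := Finsupp.single a 1 + Finsupp.single b 1

lemma pr_apply (a b i : Fin m) :
    pr a b i = (if i = a then 1 else 0) + (if i = b then 1 else 0) := by
  simp [pr, Finsupp.single_apply, eq_comm]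

lemma pr_comm (a b : Fin m) : pr a b = pr b a := add_comm _ _

lemma piF_pr (a b : Fin m) (j : Fin n) :
    piF e (pr a b) j = incid e a j + incid e b j := by
  rw [pr, piF_add, piF_single, piF_single, one_mul, one_mul]

lemma sum_pr (a b : Fin m) : ∑ i, pr a b i = 2 := by
  have : ∀ i, pr a b i = (if i = a then 1 else 0) + (if i = b then 1 else 0) := pr_apply a b
  rw [Finset.sum_congr rfl fun i _ => this i, Finset.sum_add_distrib]
  simp [Finset.sum_ite_eq']

lemma exists_nonzero_of_sum_ne_zero {f : Fin m →₀ ℕ} {s : Finset (Fin m)}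
    (h : ∑ i ∈ s, f i ≠ 0) : ∃ c ∈ s, f c ≠ 0 := by
  by_contra hc
  push_neg at hc
  exact h (Finset.sum_eq_zero hc)

lemma exists_single_of_sum_eq_one {f : Fin m →₀ ℕ} (h : ∑ i, f i = 1) :
    ∃ c, f = Finsupp.single c 1 := by
  obtain ⟨c, _, hc⟩ := exists_nonzero_of_sum_ne_zero (s := Finset.univ) (f := f) (by omega)
  have hle : f c ≤ 1 := h ▸ Finset.single_le_sum (f := fun i => f i)
    (fun i _ => Nat.zero_le _) (Finset.mem_univ c)
  have herase : f c + ∑ x ∈ Finset.univ.erase c, f x = ∑ x, f x :=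
    Finset.add_sum_erase Finset.univ (fun i => f i) (Finset.mem_univ c)
  have hrest : ∀ i, i ≠ c → f i = 0 := by
    intro i hi
    have h2 : ∑ x ∈ Finset.univ.erase c, f x = 0 := by omega
    exact Finset.sum_eq_zero_iff.mp h2 i (by simp [hi])
  refine ⟨c, ?_⟩
  ext i
  rcases eq_or_ne i c with rfl | hi
  · simp [Finsupp.single_apply]; omega
  · simp [Finsupp.single_apply, Ne.symm hi, hrest i hi]

lemma exists_pair_of_sum_eq_two {f : Fin m →₀ ℕ} (h : ∑ i, f i = 2) :
    ∃ c d, f = Finsupp.single c 1 + Finsupp.single d 1 := by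
  obtain ⟨c, _, hc⟩ := exists_nonzero_of_sum_ne_zero (s := Finset.univ) (f := f) (by omega)
  have hle : f c ≤ 2 := h ▸ Finset.single_le_sum (f := fun i => f i)
    (fun i _ => Nat.zero_le _) (Finset.mem_univ c)
  have herase : f c + ∑ x ∈ Finset.univ.erase c, f x = ∑ x, f x :=
    Finset.add_sum_erase Finset.univ (fun i => f i) (Finset.mem_univ c)
  rcases (by omega : f c = 2 ∨ f c = 1) with h2 | h1
  · refine ⟨c, c, ?_⟩
    have hrest : ∀ i, i ≠ c → f i = 0 := by
      intro i hi
      have hz : ∑ x ∈ Finset.univ.erase c, f x = 0 := by omega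
      exact Finset.sum_eq_zero_iff.mp hz i (by simp [hi])
    ext i
    rcases eq_or_ne i c with rfl | hi
    · simp [Finsupp.single_apply]; omega
    · simp [Finsupp.single_apply, Ne.symm hi, hrest i hi]
  · have hz : ∑ x ∈ Finset.univ.erase c, f x = 1 := by omega
    obtain ⟨d, hd, hfd⟩ := exists_nonzero_of_sum_ne_zero (by omega : ∑ x ∈ Finset.univ.erase c, f x ≠ 0)
    have hdc : d ≠ c := (Finset.mem_erase.mp hd).1
    have hled : f d ≤ 1 := hz ▸ Finset.single_le_sum (f := fun i => f i)
      (fun i _ => Nat.zero_le _) hd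
    have herase2 : f d + ∑ x ∈ (Finset.univ.erase c).erase d, f x = ∑ x ∈ Finset.univ.erase c, f x :=
      Finset.add_sum_erase (Finset.univ.erase c) (fun i => f i) hd
    have hrest : ∀ i, i ≠ c → i ≠ d → f i = 0 := by
      intro i hic hid
      have hz2 : ∑ x ∈ (Finset.univ.erase c).erase d, f x = 0 := by omega
      exact Finset.sum_eq_zero_iff.mp hz2 i (by simp [hic, hid])
    refine ⟨c, d, ?_⟩
    ext i
    rcases eq_or_ne i c with rfl | hic
    · simp [Finsupp.single_apply, hdc]; omega
    · rcases eq_or_ne i d with rfl | hid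
      · simp [Finsupp.single_apply, Ne.symm hic]; omega
      · simp [Finsupp.single_apply, Ne.symm hic, Ne.symm hid, hrest i hic hid]

variable (he : Function.Injective e) (hl : ∀ i, ¬ (e i).IsDiag)
include hl

lemma eq_zero_of_piF_eq_zero {u : Fin m →₀ ℕ} (h : ∀ j, piF e u j = 0) : u = 0 := by
  have h2 : 2 * ∑ i, u i = 0 := by
    rw [← sum_piF hl u]; exact Finset.sum_eq_zero fun j _ => h j
  have h3 : ∑ i, u i = 0 := by omega
  have h4 : ∀ i ∈ Finset.univ, u i = 0 := Finset.sum_eq_zero_iff.mp h3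
  ext i; simpa using h4 i (Finset.mem_univ i)

include he in
lemma eq_single_of_piF {q : Fin m →₀ ℕ} {a : Fin m}
    (h : ∀ j, piF e q j = piF e (Finsupp.single a 1) j) : q = Finsupp.single a 1 := by
  have hdeg : 2 * ∑ i, q i = 2 * ∑ i, (Finsupp.single a 1 : Fin m →₀ ℕ) i := by
    rw [← sum_piF hl, ← sum_piF hl]
    exact Finset.sum_congr rfl fun j _ => h j
  have hs1 : ∑ i, (Finsupp.single a 1 : Fin m →₀ ℕ) i = 1 := by
    simp [Finsupp.single_apply, Finset.sum_ite_eq']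
  have hq1 : ∑ i, q i = 1 := by omega
  obtain ⟨c, rfl⟩ := exists_single_of_sum_eq_one hq1
  have hcol : ∀ j, incid e c j = incid e a j := by
    intro j
    have := h j
    rw [piF_single, piF_single, one_mul, one_mul] at this
    exact this
  have : e c = e a := edge_eq_of_incid (hl c) hcol
  rw [he this]

include he in
/-- if `pr c d` and `2·single a` have the same degree vector then `c = d = a`. -/
lemma diag_fiber {a c d : Fin m}
    (h : ∀ j, incid e c j + incid e d j = 2 * incid e a j) : c = a ∧ d = a := by
  have hc : ∀ j, incid e c j = incid e a j := by
    intro j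
    have h1 := h j
    have b1 := incid_le_one (e := e) c j
    have b2 := incid_le_one (e := e) d j
    have b3 := incid_le_one (e := e) a j
    omega
  have hd : ∀ j, incid e d j = incid e a j := by
    intro j
    have h1 := h j
    have b1 := incid_le_one (e := e) c j
    have b2 := incid_le_one (e := e) d j
    have b3 := incid_le_one (e := e) a j
    omega
  exact ⟨he (edge_eq_of_incid (hl c) hc), he (edge_eq_of_incid (hl d) hd)⟩

include he in
lemma cancel_incid {a b d : Fin m}
    (h : ∀ j, incid e a j + incid e d j = incid e a j + incid e b j) : d = b := by
  have : ∀ j, incid e d j = incid e b j := fun j => by have := h j; omega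
  exact he (edge_eq_of_incid (hl d) this)

include he in
/-- the key disjointness facts for two distinct members of a quadratic fiber -/
lemma pair_fiber_cases {a b c d : Fin m} (hab : a ≠ b)
    (hπ : ∀ j, incid e a j + incid e b j = incid e c j + incid e d j)
    (hne : pr a b ≠ pr c d) :
    c ≠ d ∧ a ≠ c ∧ a ≠ d ∧ b ≠ c ∧ b ≠ d := by
  have hcd : c ≠ d := by
    rintro rfl
    obtain ⟨h1, h2⟩ := diag_fiber he hl (a := c) (c := a) (d := b) (fun j => by have := hπ j; omega)
    exact hab (h1.trans h2.symm)
  refine ⟨hcd, ?_, ?_, ?_, ?_⟩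
  · rintro rfl
    have hdb : d = b := cancel_incid he hl (a := a) (fun j => (hπ j).symm)
    exact hne (by rw [hdb])
  · rintro rfl
    have hcb : c = b := cancel_incid he hl (a := a) (fun j => by have := hπ j; omega)
    subst hcb
    exact hne (pr_comm _ _)
  · rintro rfl
    have hda : d = a := cancel_incid he hl (a := b) (fun j => by have := hπ j; omega)
    subst hda
    exact hne (pr_comm _ _)
  · rintro rfl
    have hca : c = a := cancel_incid he hl (a := b) (fun j => by have := hπ j; omega)
    subst hca
    exact hne rfl

omit hl in
lemma le_pair_cases {p : Fin m →₀ ℕ} {a b : Fin m} (hab : a ≠ b)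
    (h : ∀ i, p i ≤ pr a b i) :
    p = 0 ∨ p = Finsupp.single a 1 ∨ p = Finsupp.single b 1 ∨ p = pr a b := by
  have ha : p a ≤ 1 := by have := h a; rw [pr_apply] at this; simp [hab] at this; omega
  have hb : p b ≤ 1 := by have := h b; rw [pr_apply] at this; simp [Ne.symm hab] at this; omega
  have hrest : ∀ i, i ≠ a → i ≠ b → p i = 0 := by
    intro i hia hib
    have := h i; rw [pr_apply] at this; simp [hia, hib] at this; omega
  rcases (by omega : p a = 0 ∨ p a = 1) with ha0 | ha1 <;>
    rcases (by omega : p b = 0 ∨ p b = 1) with hb0 | hb1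
  · left; ext i
    rcases eq_or_ne i a with rfl | hia
    · simpa using ha0
    rcases eq_or_ne i b with rfl | hib
    · simpa using hb0
    simpa using hrest i hia hib
  · right; right; left; ext i
    rcases eq_or_ne i b with rfl | hib
    · simp [Finsupp.single_apply, hb1]
    rw [Finsupp.single_apply, if_neg (Ne.symm hib)]
    rcases eq_or_ne i a with rfl | hia
    · exact ha0
    exact hrest i hia hib
  · right; left; ext i
    rcases eq_or_ne i a with rfl | hia
    · simp [Finsupp.single_apply, ha1]
    rw [Finsupp.single_apply, if_neg (Ne.symm hia)]
    rcases eq_or_ne i b with rfl | hib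
    · exact hb0
    exact hrest i hia hib
  · right; right; right; ext i
    rw [pr_apply]
    rcases eq_or_ne i a with rfl | hia
    · simp [hab, ha1]
    rcases eq_or_ne i b with rfl | hib
    · simp [Ne.symm hab, hb1]
    simp [hia, hib, hrest i hia hib]

end ToricAux

end Part2
namespace ToricAux

variable {n m : ℕ} {e : Fin m → Sym2 (Fin n)} {K : Type*} [Field K]

lemma toricMap_monomial (u : Fin m →₀ ℕ) :
    toricMap K e (monomial u 1) = ∏ j, X j ^ piF e u j := by
  unfold toricMap
  rw [aeval_monomial, map_one, one_mul]
  rw [Finsupp.prod_fintype _ _ (fun i => pow_zero _)]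
  have h1 : ∀ i, (∏ j, (X j : MvPolynomial (Fin n) K) ^ incid e i j) ^ u i
      = ∏ j, X j ^ (incid e i j * u i) := by
    intro i
    rw [← Finset.prod_pow]
    exact Finset.prod_congr rfl fun j _ => by rw [← pow_mul]
  rw [Finset.prod_congr rfl fun i _ => h1 i, Finset.prod_comm]
  exact Finset.prod_congr rfl fun j _ => Finset.prod_pow_eq_pow_sum _ _ _

lemma prodX_eq_monomial (c : Fin n → ℕ) :
    (∏ j, (X j : MvPolynomial (Fin n) K) ^ c j)
      = monomial (Finsupp.equivFunOnFinite.symm c) 1 := by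
  rw [monomial_eq, C_1, one_mul, Finsupp.prod_fintype _ _ (fun i => pow_zero _)]
  exact Finset.prod_congr rfl fun j _ => by
    rw [Finsupp.coe_equivFunOnFinite_symm]

lemma mem_toricIdeal_iff (u v : Fin m →₀ ℕ) :
    (monomial u 1 - monomial v 1 : MvPolynomial (Fin m) K) ∈ toricIdeal K e
      ↔ ∀ j, piF e u j = piF e v j := by
  rw [toricIdeal, RingHom.mem_ker, map_sub, toricMap_monomial, toricMap_monomial,
      sub_eq_zero, prodX_eq_monomial, prodX_eq_monomial]
  constructor
  · intro h j
    have h2 := monomial_left_injective (one_ne_zero (α := K)) h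
    have h3 := Finsupp.equivFunOnFinite.symm.injective h2
    exact congrFun h3 j
  · intro h
    have : piF e u = piF e v := funext h
    rw [this]

end ToricAux
namespace ToricAux

variable {m : ℕ} {K : Type*} [Field K]

/-- one-step move along a binomial of `S` -/
def Rel (S : Set (MvPolynomial (Fin m) K)) (w w' : Fin m →₀ ℕ) : Prop :=
  ∃ p q c : Fin m →₀ ℕ, (monomial p 1 - monomial q 1) ∈ S ∧ w = c + p ∧ w' = c + q

/-- the linear "fiber class" map -/
def lam (S : Set (MvPolynomial (Fin m) K)) (f : MvPolynomial (Fin m) K) :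
    Quot (Rel S) →₀ K :=
  Finsupp.mapDomain (Quot.mk (Rel S)) (AddMonoidAlgebra.coeff f)

lemma lam_add (S : Set (MvPolynomial (Fin m) K)) (f g : MvPolynomial (Fin m) K) :
    lam S (f + g) = lam S f + lam S g := by
  unfold lam; exact Finsupp.mapDomain_add

lemma lam_smul (S : Set (MvPolynomial (Fin m) K)) (r : K) (f : MvPolynomial (Fin m) K) :
    lam S (r • f) = r • lam S f :=
  by unfold lam; exact Finsupp.mapDomain_smul _ _

lemma lam_zero (S : Set (MvPolynomial (Fin m) K)) : lam S 0 = 0 := by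
  unfold lam; exact Finsupp.mapDomain_zero

lemma lam_monomial (S : Set (MvPolynomial (Fin m) K)) (u : Fin m →₀ ℕ) (r : K) :
    lam S (monomial u r) = Finsupp.single (Quot.mk (Rel S) u) r := by
  rw [← MvPolynomial.single_eq_monomial]
  unfold lam; rw [AddMonoidAlgebra.coeff_single]
  exact Finsupp.mapDomain_single

lemma lam_sub (S : Set (MvPolynomial (Fin m) K)) (f g : MvPolynomial (Fin m) K) :
    lam S (f - g) = lam S f - lam S g := by
  have h := lam_add S (f - g) g
  rw [sub_add_cancel] at h
  rw [h, add_sub_cancel_right]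

lemma lam_ker {S : Set (MvPolynomial (Fin m) K)} (hS : ∀ p ∈ S, IsBinomial p)
    {f : MvPolynomial (Fin m) K} (hf : f ∈ Ideal.span S) :
    ∀ c : Fin m →₀ ℕ, lam S (monomial c 1 * f) = 0 := by
  refine Submodule.span_induction ?_ ?_ ?_ ?_ hf
  · intro s hs c
    obtain ⟨p, q, rfl⟩ := hS s hs
    rw [mul_sub, MvPolynomial.monomial_mul, MvPolynomial.monomial_mul, mul_one, lam_sub,
      lam_monomial, lam_monomial]
    have hcl : Quot.mk (Rel S) (c + p) = Quot.mk (Rel S) (c + q) :=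
      Quot.sound ⟨p, q, c, hs, rfl, rfl⟩
    rw [hcl, sub_self]
  · intro c; rw [mul_zero, lam_zero]
  · intro x y _ _ hx hy c; rw [mul_add, lam_add, hx, hy, add_zero]
  · intro a x _ hx
    simp only [smul_eq_mul]
    induction a using MvPolynomial.induction_on' with
    | monomial d r =>
      intro c
      have key : monomial c 1 * (monomial d r * x) = r • (monomial (c + d) 1 * x) := by
        rw [← mul_assoc, MvPolynomial.monomial_mul, one_mul, ← smul_mul_assoc,
          MvPolynomial.smul_monomial, smul_eq_mul, mul_one]
      rw [key, lam_smul, hx, smul_zero]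
    | add p q hp hq =>
      intro c
      rw [add_mul, mul_add, lam_add, hp, hq, add_zero]

lemma eqvGen_of_mem_span {S : Set (MvPolynomial (Fin m) K)} (hS : ∀ p ∈ S, IsBinomial p)
    {u v : Fin m →₀ ℕ}
    (h : (monomial u 1 - monomial v 1 : MvPolynomial (Fin m) K) ∈ Ideal.span S) :
    Relation.EqvGen (Rel S) u v := by
  have h0 := lam_ker hS h 0
  rw [MvPolynomial.monomial_zero', MvPolynomial.C_1, one_mul, lam_sub, lam_monomial,
    lam_monomial, sub_eq_zero] at h0
  have h1 := (Finsupp.single_left_inj (one_ne_zero (α := K))).mp h0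
  exact Quot.eq.mp h1

/-- there is a nontrivial move of `S` applicable at `w` -/
def StepAt (S : Set (MvPolynomial (Fin m) K)) (w : Fin m →₀ ℕ) : Prop :=
  ∃ p q c : Fin m →₀ ℕ,
    ((monomial p 1 - monomial q 1) ∈ S ∨ (monomial q 1 - monomial p 1) ∈ S) ∧ p ≠ q ∧ w = c + p

lemma stepAt_of_eqvGen {S : Set (MvPolynomial (Fin m) K)} {u v : Fin m →₀ ℕ}
    (h : Relation.EqvGen (Rel S) u v) :
    u = v ∨ (StepAt S u ∧ StepAt S v) := by
  induction h with
  | rel x y hxy =>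
    obtain ⟨p, q, c, hmem, rfl, rfl⟩ := hxy
    rcases eq_or_ne p q with rfl | hpq
    · exact Or.inl rfl
    · exact Or.inr ⟨⟨p, q, c, Or.inl hmem, hpq, rfl⟩, ⟨q, p, c, Or.inr hmem, hpq.symm, rfl⟩⟩
  | refl x => exact Or.inl rfl
  | symm x y _ ih =>
    rcases ih with h' | ⟨h1, h2⟩
    · exact Or.inl h'.symm
    · exact Or.inr ⟨h2, h1⟩
  | trans x y z _ _ ih1 ih2 =>
    rcases ih1 with rfl | ⟨h1, h2⟩
    · exact ih2
    · rcases ih2 with rfl | ⟨h3, h4⟩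
      · exact Or.inr ⟨h1, h2⟩
      · exact Or.inr ⟨h1, h4⟩

lemma eq_or_eq_of_binomial_eq {p q a b : Fin m →₀ ℕ} (hpq : p ≠ q)
    (h : (monomial p 1 - monomial q 1 : MvPolynomial (Fin m) K) = monomial a 1 - monomial b 1) :
    p = a ∨ p = b := by
  by_contra hc
  push_neg at hc
  have h2 := congrArg (MvPolynomial.coeff p) h
  classical
  rw [MvPolynomial.coeff_sub, MvPolynomial.coeff_sub, MvPolynomial.coeff_monomial,
    MvPolynomial.coeff_monomial, MvPolynomial.coeff_monomial, MvPolynomial.coeff_monomial,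
    if_pos rfl, if_neg (Ne.symm hpq), if_neg (Ne.symm hc.1), if_neg (Ne.symm hc.2)] at h2
  norm_num at h2

end ToricAux
namespace ToricAux

variable {n m : ℕ} {e : Fin m → Sym2 (Fin n)}

/-- kernel of the incidence matrix, over ℤ -/
def Ker (e : Fin m → Sym2 (Fin n)) (v : Fin m → ℤ) : Prop :=
  ∀ j, ∑ i, (incid e i j : ℤ) * v i = 0

lemma Ker.neg {v : Fin m → ℤ} (hv : Ker e v) : Ker e (-v) := by
  intro j
  have := hv j
  rw [← neg_eq_zero, ← Finset.sum_neg_distrib] at this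
  rw [← this]
  exact Finset.sum_congr rfl fun i _ => by simp

lemma sum_eq_zero_of_ker (hl : ∀ i, ¬ (e i).IsDiag) {v : Fin m → ℤ} (hv : Ker e v) :
    ∑ i, v i = 0 := by
  have h1 : ∑ j, ∑ i, (incid e i j : ℤ) * v i = 0 :=
    Finset.sum_eq_zero fun j _ => hv j
  rw [Finset.sum_comm] at h1
  have h2 : ∀ i, ∑ j, (incid e i j : ℤ) * v i = 2 * v i := by
    intro i
    rw [← Finset.sum_mul]
    have h3 : ∑ j, ((incid e i j : ℤ)) = 2 := by
      have h4 := sum_incid hl i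
      have : ((∑ j, incid e i j : ℕ) : ℤ) = ∑ j, ((incid e i j : ℕ) : ℤ) := by push_cast; rfl
      omega
    rw [h3]
  rw [Finset.sum_congr rfl fun i _ => h2 i, ← Finset.mul_sum] at h1
  omega

lemma exists_pos_and_neg (hl : ∀ i, ¬ (e i).IsDiag) {v : Fin m → ℤ} (hv : Ker e v)
    (hv0 : v ≠ 0) : (∃ p, 0 < v p) ∧ (∃ q, v q < 0) := by
  have hsum := sum_eq_zero_of_ker hl hv
  obtain ⟨i0, hi0⟩ := Function.ne_iff.mp hv0
  constructor
  · by_contra hc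
    push_neg at hc
    have hall : ∀ i ∈ Finset.univ, v i ≤ 0 := fun i _ => hc i
    have := (Finset.sum_eq_zero_iff_of_nonpos hall).mp hsum i0 (Finset.mem_univ i0)
    exact hi0 this
  · by_contra hc
    push_neg at hc
    have hall : ∀ i ∈ Finset.univ, 0 ≤ v i := fun i _ => hc i
    have := (Finset.sum_eq_zero_iff_of_nonneg hall).mp hsum i0 (Finset.mem_univ i0)
    exact hi0 this

lemma pos_support_not_singleton (he : Function.Injective e) (hl : ∀ i, ¬ (e i).IsDiag)
    {v : Fin m → ℤ} (hv : Ker e v) (hv0 : v ≠ 0) (p : Fin m)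
    (hp : {i | 0 < v i} = {p}) : False := by
  have hvp : 0 < v p := by
    have := (Set.ext_iff.mp hp p).mpr rfl
    exact this
  have hle : ∀ i, i ≠ p → v i ≤ 0 := by
    intro i hi
    have := Set.ext_iff.mp hp i
    simp only [Set.mem_setOf_eq, Set.mem_singleton_iff] at this
    rcases lt_or_ge 0 (v i) with h | h
    · exact absurd (this.mp h) hi
    · exact h
  obtain ⟨-, q, hq⟩ := exists_pos_and_neg hl hv hv0
  have hqp : q ≠ p := by rintro rfl; omega
  have hsub : ∀ j, j ∈ e q → j ∈ e p := by
    intro j hj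
    by_contra hjp
    have hkj := hv j
    have hsplit : (incid e p j : ℤ) * v p
        + ∑ i ∈ Finset.univ.erase p, (incid e i j : ℤ) * v i = 0 := by
      rw [Finset.add_sum_erase Finset.univ (fun i => (incid e i j : ℤ) * v i) (Finset.mem_univ p)]
      exact hkj
    have hpj : incid e p j = 0 := by unfold incid; simp [hjp]
    have hqj : incid e q j = 1 := incid_eq_one_iff.mpr hj
    have hterm : ∀ i ∈ Finset.univ.erase p, (incid e i j : ℤ) * v i ≤ 0 := by
      intro i hi
      have h1 := hle i (Finset.mem_erase.mp hi).1
      have h2 : (0 : ℤ) ≤ (incid e i j : ℤ) := Int.natCast_nonneg _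
      exact mul_nonpos_of_nonneg_of_nonpos h2 h1
    have hqmem : q ∈ Finset.univ.erase p := Finset.mem_erase.mpr ⟨hqp, Finset.mem_univ q⟩
    have hsplit2 : (incid e q j : ℤ) * v q
        + ∑ i ∈ (Finset.univ.erase p).erase q, (incid e i j : ℤ) * v i
        = ∑ i ∈ Finset.univ.erase p, (incid e i j : ℤ) * v i :=
      Finset.add_sum_erase _ (fun i => (incid e i j : ℤ) * v i) hqmem
    have hrest : ∑ i ∈ (Finset.univ.erase p).erase q, (incid e i j : ℤ) * v i ≤ 0 :=
      Finset.sum_nonpos fun i hi => hterm i (Finset.mem_of_mem_erase hi)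
    rw [hpj] at hsplit
    rw [hqj] at hsplit2
    push_cast at hsplit hsplit2
    omega
  exact hqp (he (sym2_eq_of_mem_subset (hl q) hsub))

lemma neg_support_not_singleton (he : Function.Injective e) (hl : ∀ i, ¬ (e i).IsDiag)
    {v : Fin m → ℤ} (hv : Ker e v) (hv0 : v ≠ 0) (p : Fin m)
    (hp : {i | v i < 0} = {p}) : False := by
  refine pos_support_not_singleton he hl (Ker.neg hv) (by simpa using hv0) p ?_
  rw [← hp]
  ext i
  simp

end ToricAux
namespace ToricAux

variable {n m : ℕ} {e : Fin m → Sym2 (Fin n)}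

/-- the circuit vector supported on a 4-cycle -/
def wvec (a b c d : Fin m) : Fin m → ℤ := fun i =>
  ((if i = a then 1 else 0) + (if i = b then 1 else 0))
    - ((if i = c then 1 else 0) + (if i = d then 1 else 0))

lemma sum_mul_wvec (f : Fin m → ℤ) (a b c d : Fin m) :
    ∑ i, f i * wvec a b c d i = f a + f b - f c - f d := by
  unfold wvec
  have h1 : ∀ i, f i * (((if i = a then (1:ℤ) else 0) + (if i = b then 1 else 0))
      - ((if i = c then 1 else 0) + (if i = d then 1 else 0)))
      = ((if i = a then f i else 0) + (if i = b then f i else 0))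
        - ((if i = c then f i else 0) + (if i = d then f i else 0)) := by
    intro i
    split_ifs <;> ring
  rw [Finset.sum_congr rfl fun i _ => h1 i, Finset.sum_sub_distrib,
    Finset.sum_add_distrib, Finset.sum_add_distrib]
  simp [Finset.sum_ite_eq']
  ring

section Distinct

variable {a b c d : Fin m} (hab : a ≠ b) (hcd : c ≠ d)
  (hac : a ≠ c) (had : a ≠ d) (hbc : b ≠ c) (hbd : b ≠ d)

include hac had in
lemma wvec_a : wvec a b c d a = 1 + (if a = b then 1 else 0) := by
  unfold wvec; simp [hac, had]

include hab hac had hbc hbd in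
lemma wvec_pos_set : {i | 0 < wvec a b c d i} = {i | i = a ∨ i = b} := by
  ext i
  unfold wvec
  simp only [Set.mem_setOf_eq]
  rcases eq_or_ne i a with rfl | hia <;> rcases eq_or_ne i b with rfl | hib <;>
    rcases eq_or_ne i c with rfl | hic <;> rcases eq_or_ne i d with rfl | hid <;>
    simp_all <;> omega

include hab hcd hac had hbc hbd in
lemma wvec_supp_set : {i | wvec a b c d i ≠ 0} = {i | i = a ∨ i = b ∨ i = c ∨ i = d} := by
  ext i
  unfold wvec
  simp only [Set.mem_setOf_eq]
  rcases eq_or_ne i a with rfl | hia <;> rcases eq_or_ne i b with rfl | hib <;>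
    rcases eq_or_ne i c with rfl | hic <;> rcases eq_or_ne i d with rfl | hid <;>
    simp_all <;> omega

variable (he : Function.Injective e) (hl : ∀ i, ¬ (e i).IsDiag)
  (hπ : ∀ j, incid e a j + incid e b j = incid e c j + incid e d j)

include hπ in
lemma wvec_ker : Ker e (wvec a b c d) := by
  intro j
  rw [sum_mul_wvec]
  have := hπ j
  omega

include hab hcd hac had hbc hbd he hl hπ in
lemma wvec_circuit : IsCircuit e (wvec a b c d) := by
  have hne : wvec a b c d ≠ 0 := by
    intro h
    have := congrFun h a
    rw [wvec_a hac had] at this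
    simp [hab] at this
  refine ⟨hne, wvec_ker hπ, ?_, ?_⟩
  · -- minimality
    intro v hv0 hvker hsub
    have hsupp := wvec_supp_set hab hcd hac had hbc hbd
    rw [hsupp] at hsub ⊢
    by_contra hne'
    obtain ⟨x, hx4, hvx⟩ : ∃ x, (x = a ∨ x = b ∨ x = c ∨ x = d) ∧ v x = 0 := by
      by_contra hc
      push_neg at hc
      apply hne'
      refine Set.Subset.antisymm hsub fun i hi => ?_
      simp only [Set.mem_setOf_eq] at hi ⊢
      exact hc i hi
    -- cardinality argument
    classical
    set P := Finset.univ.filter (fun i => 0 < v i) with hP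
    set N := Finset.univ.filter (fun i => v i < 0) with hN
    obtain ⟨⟨p, hp⟩, ⟨q, hq⟩⟩ := exists_pos_and_neg hl hvker hv0
    have hPne : P.Nonempty := ⟨p, by simp [hP, hp]⟩
    have hNne : N.Nonempty := ⟨q, by simp [hN, hq]⟩
    have hdisj : Disjoint P N := by
      rw [Finset.disjoint_left]
      intro i hiP hiN
      simp [hP, hN] at hiP hiN
      omega
    have hPN : P ∪ N ⊆ (({a, b, c, d} : Finset (Fin m)).erase x) := by
      intro i hi
      have hvi : v i ≠ 0 := by
        rcases Finset.mem_union.mp hi with h | h <;> simp [hP, hN] at h <;> omega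
      have hi4 := hsub hvi
      simp only [Set.mem_setOf_eq] at hi4
      refine Finset.mem_erase.mpr ⟨?_, by simp [hi4]⟩
      rintro rfl
      exact hvi hvx
    have hcard4 : ({a, b, c, d} : Finset (Fin m)).card ≤ 4 := by
      apply le_trans (Finset.card_insert_le _ _)
      apply Nat.succ_le_succ
      apply le_trans (Finset.card_insert_le _ _)
      apply Nat.succ_le_succ
      apply le_trans (Finset.card_insert_le _ _)
      apply Nat.succ_le_succ
      simp
    have hxmem : x ∈ ({a, b, c, d} : Finset (Fin m)) := by
      simp only [Finset.mem_insert, Finset.mem_singleton]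
      tauto
    have hcard3 : (({a, b, c, d} : Finset (Fin m)).erase x).card ≤ 3 := by
      have := Finset.card_erase_of_mem hxmem
      omega
    have hcardPN : P.card + N.card ≤ 3 := by
      rw [← Finset.card_union_of_disjoint hdisj]
      exact le_trans (Finset.card_le_card hPN) hcard3
    have hP1 : 1 ≤ P.card := Finset.card_pos.mpr hPne
    have hN1 : 1 ≤ N.card := Finset.card_pos.mpr hNne
    rcases (by omega : P.card = 1 ∨ N.card = 1) with h1 | h1
    · obtain ⟨p0, hp0⟩ := Finset.card_eq_one.mp h1
      refine pos_support_not_singleton he hl hvker hv0 p0 ?_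
      ext i
      have := Finset.ext_iff.mp hp0 i
      simp [hP] at this
      simpa using this
    · obtain ⟨q0, hq0⟩ := Finset.card_eq_one.mp h1
      refine neg_support_not_singleton he hl hvker hv0 q0 ?_
      ext i
      have := Finset.ext_iff.mp hq0 i
      simp [hN] at this
      simpa using this
  · -- gcd = 1
    have hdvd : Finset.univ.gcd (wvec a b c d) ∣ wvec a b c d a :=
      Finset.gcd_dvd (Finset.mem_univ a)
    rw [wvec_a hac had, if_neg hab, add_zero] at hdvd
    have hunit : IsUnit (Finset.univ.gcd (wvec a b c d)) := isUnit_of_dvd_one hdvd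
    rcases Int.isUnit_iff.mp hunit with h1 | h1
    · exact h1
    · exfalso
      have hnorm := Finset.normalize_gcd (s := (Finset.univ : Finset (Fin m)))
        (f := wvec a b c d)
      rw [h1, Int.normalize_of_nonpos (by norm_num)] at hnorm
      norm_num at hnorm

include hab hcd hac had hbc hbd he hl hπ in
lemma pair_mem_Cmin : ({i | i = a ∨ i = b} : Set (Fin m)) ∈ Cmin e := by
  have hcirc := wvec_circuit hab hcd hac had hbc hbd he hl hπ
  constructor
  · exact ⟨wvec a b c d, hcirc, Or.inl (wvec_pos_set hab hac had hbc hbd).symm⟩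
  · rintro E' ⟨u', hu', hcase⟩ hsub
    have hu0 := hu'.1
    have huker : Ker e u' := hu'.2.1
    have hnonempty : E'.Nonempty ∧ ∀ x, E' ≠ {x} := by
      obtain ⟨⟨p, hp⟩, ⟨q, hq⟩⟩ := exists_pos_and_neg hl huker hu0
      rcases hcase with rfl | rfl
      · exact ⟨⟨p, hp⟩, fun x hx => pos_support_not_singleton he hl huker hu0 x hx⟩
      · exact ⟨⟨q, hq⟩, fun x hx => neg_support_not_singleton he hl huker hu0 x hx⟩
    obtain ⟨⟨x, hxE⟩, hnotsing⟩ := hnonempty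
    obtain ⟨y, hyE, hyx⟩ : ∃ y ∈ E', y ≠ x := by
      by_contra hc
      push_neg at hc
      exact hnotsing x (Set.eq_singleton_iff_unique_mem.mpr ⟨hxE, hc⟩)
    have hxab := hsub hxE
    have hyab := hsub hyE
    simp only [Set.mem_setOf_eq] at hxab hyab
    have hboth : a ∈ E' ∧ b ∈ E' := by
      rcases hxab with rfl | rfl <;> rcases hyab with rfl | rfl
      · exact absurd rfl hyx
      · exact ⟨hxE, hyE⟩
      · exact ⟨hyE, hxE⟩
      · exact absurd rfl hyx
    refine Set.Subset.antisymm hsub fun i hi => ?_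
    simp only [Set.mem_setOf_eq] at hi
    rcases hi with rfl | rfl
    · exact hboth.1
    · exact hboth.2

end Distinct

end ToricAux
namespace ToricAux

variable {n m : ℕ} {e : Fin m → Sym2 (Fin n)}

lemma X_mul_X_eq {K : Type*} [Field K] (i j : Fin m) :
    (X i * X j : MvPolynomial (Fin m) K) = monomial (pr i j) 1 := by
  have hX : ∀ k : Fin m, (X k : MvPolynomial (Fin m) K) = monomial (Finsupp.single k 1) 1 := by
    intro k
    rw [← MvPolynomial.X_pow_eq_monomial, pow_one]
  rw [hX i, hX j, MvPolynomial.monomial_mul, mul_one]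
  rfl

lemma binomial_pair_shape {K : Type*} [Field K] {α β : Fin m →₀ ℕ} {i j k l : Fin m}
    (hab : α ≠ β)
    (h : (monomial α 1 - monomial β 1 : MvPolynomial (Fin m) K) = X i * X j - X k * X l) :
    (∃ a b, α = pr a b) ∧ (∃ c d, β = pr c d) := by
  rw [X_mul_X_eq, X_mul_X_eq] at h
  constructor
  · rcases eq_or_eq_of_binomial_eq hab h with h1 | h1
    exacts [⟨i, j, h1⟩, ⟨k, l, h1⟩]
  · have h2 : (monomial β 1 - monomial α 1 : MvPolynomial (Fin m) K)
        = monomial (pr k l) 1 - monomial (pr i j) 1 := by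
      have h3 := congrArg Neg.neg h
      rwa [neg_sub, neg_sub] at h3
    rcases eq_or_eq_of_binomial_eq hab.symm h2 with h1 | h1
    exacts [⟨k, l, h1⟩, ⟨i, j, h1⟩]

lemma span_diff_zero {K : Type*} [Field K] (S : Set (MvPolynomial (Fin m) K)) :
    Ideal.span (S \ {0}) = Ideal.span S := by
  refine le_antisymm (Ideal.span_mono Set.diff_subset) (Ideal.span_le.mpr fun s hs => ?_)
  by_cases h : s = 0
  · rw [h]; exact Ideal.zero_mem _
  · exact Ideal.subset_span ⟨hs, h⟩

variable (he : Function.Injective e) (hl : ∀ i, ¬ (e i).IsDiag)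
include he hl

lemma pair_distinct {a b c d : Fin m}
    (hπ : ∀ j, piF e (pr a b) j = piF e (pr c d) j) (hne : pr a b ≠ pr c d) :
    a ≠ b ∧ c ≠ d ∧ a ≠ c ∧ a ≠ d ∧ b ≠ c ∧ b ≠ d := by
  have hπ' : ∀ j, incid e a j + incid e b j = incid e c j + incid e d j := by
    intro j; have := hπ j; rwa [piF_pr, piF_pr] at this
  have hab : a ≠ b := by
    rintro rfl
    obtain ⟨h1, h2⟩ := diag_fiber he hl (a := a) (c := c) (d := d)
      (fun j => by have := hπ' j; omega)
    exact hne (by rw [h1, h2])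
  obtain ⟨h1, h2, h3, h4, h5⟩ := pair_fiber_cases he hl hab hπ' hne
  exact ⟨hab, h1, h2, h3, h4, h5⟩

lemma pair_mem_Cmin' {a b c d : Fin m}
    (hπ : ∀ j, piF e (pr a b) j = piF e (pr c d) j) (hne : pr a b ≠ pr c d) :
    ({i | i = a ∨ i = b} : Set (Fin m)) ∈ Cmin e := by
  obtain ⟨hab, hcd, hac, had, hbc, hbd⟩ := pair_distinct he hl hπ hne
  have hπ' : ∀ j, incid e a j + incid e b j = incid e c j + incid e d j := by
    intro j; have := hπ j; rwa [piF_pr, piF_pr] at this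
  exact pair_mem_Cmin hab hcd hac had hbc hbd he hl hπ'

lemma pair_indispensable {K : Type*} [Field K] {a b : Fin m} (hab : a ≠ b)
    {q0 : Fin m →₀ ℕ} (hq0 : ∀ j, piF e q0 j = piF e (pr a b) j) (hne : q0 ≠ pr a b) :
    IndispensableMonomial (toricIdeal K e) (pr a b) := by
  intro S hSbin hSspan
  have hmem : (monomial (pr a b) 1 - monomial q0 1 : MvPolynomial (Fin m) K)
      ∈ Ideal.span S := by
    rw [hSspan]
    exact (mem_toricIdeal_iff _ _).mpr (fun j => (hq0 j).symm)
  have hEq := eqvGen_of_mem_span hSbin hmem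
  rcases stepAt_of_eqvGen hEq with heq | ⟨⟨p, q, c, hmemS, hpq, hstep⟩, -⟩
  · exact absurd heq.symm hne
  · have hple : ∀ i, p i ≤ pr a b i := fun i => by
      have h1 : pr a b i = c i + p i := by rw [hstep]; simp
      omega
    have hSI : (monomial p 1 - monomial q 1 : MvPolynomial (Fin m) K) ∈ toricIdeal K e := by
      rcases hmemS with hmem1 | hmem1
      · rw [← hSspan]; exact Ideal.subset_span hmem1
      · have h2 : (monomial q 1 - monomial p 1 : MvPolynomial (Fin m) K) ∈ toricIdeal K e := by
          rw [← hSspan]; exact Ideal.subset_span hmem1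
        have h3 := (toricIdeal K e).neg_mem h2
        rwa [neg_sub] at h3
    have hpw : ∀ j, piF e p j = piF e q j := (mem_toricIdeal_iff _ _).mp hSI
    rcases le_pair_cases hab hple with rfl | rfl | rfl | rfl
    · exfalso
      have : q = 0 := eq_zero_of_piF_eq_zero hl (fun j => by rw [← hpw j, piF_zero])
      exact hpq this.symm
    · exfalso
      have : q = Finsupp.single a 1 := eq_single_of_piF he hl (fun j => (hpw j).symm)
      exact hpq this.symm
    · exfalso
      have : q = Finsupp.single b 1 := eq_single_of_piF he hl (fun j => (hpw j).symm)
      exact hpq this.symm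
    · rcases hmemS with hmem1 | hmem1
      · exact ⟨_, hmem1, q, Or.inl rfl⟩
      · exact ⟨_, hmem1, q, Or.inr rfl⟩

omit he hl

/-- positive part of an integer vector, as a Finsupp -/
def toNatF (u : Fin m → ℤ) : Fin m →₀ ℕ :=
  Finsupp.equivFunOnFinite.symm (fun i => (u i).toNat)

lemma toNatF_apply (u : Fin m → ℤ) (i : Fin m) : toNatF u i = (u i).toNat :=
  congrFun (Finsupp.coe_equivFunOnFinite_symm _) _

lemma toNatF_supp_pos (u : Fin m → ℤ) :
    {i | toNatF u i ≠ 0} = {i | 0 < u i} := by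
  ext i
  simp only [Set.mem_setOf_eq, toNatF_apply]
  omega

lemma piF_toNatF_eq {u : Fin m → ℤ} (hker : Ker e u) (j : Fin n) :
    piF e (toNatF u) j = piF e (toNatF (-u)) j := by
  have h := hker j
  have hcast : ((piF e (toNatF u) j : ℤ)) - ((piF e (toNatF (-u)) j : ℤ))
      = ∑ i, (incid e i j : ℤ) * u i := by
    unfold piF
    push_cast
    rw [← Finset.sum_sub_distrib]
    refine Finset.sum_congr rfl fun i _ => ?_
    rw [toNatF_apply, toNatF_apply, Pi.neg_apply, ← mul_sub]
    congr 1
    omega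
  rw [h] at hcast
  omega

lemma toNatF_ne {u : Fin m → ℤ} (hu : u ≠ 0) : toNatF u ≠ toNatF (-u) := by
  obtain ⟨i, hi⟩ := Function.ne_iff.mp hu
  intro h
  have h2 := DFunLike.congr_fun h i
  rw [toNatF_apply, toNatF_apply, Pi.neg_apply] at h2
  simp only [Pi.zero_apply] at hi
  omega

lemma pr_supp_set {a b : Fin m} (hab : a ≠ b) :
    {i | pr a b i ≠ 0} = {i | i = a ∨ i = b} := by
  ext i
  simp only [Set.mem_setOf_eq, pr_apply]
  rcases eq_or_ne i a with rfl | hia <;> rcases eq_or_ne i b with rfl | hib <;> simp_all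

end ToricAux
open ToricAux

/-- If the toric ideal `I_G` of a finite connected simple graph `G` is
generated by quadratic binomials, then the set `C_min` equals the set of supports of the
indispensable monomials of `I_G`. -/
theorem Cmin_eq_supports_indispensable_of_quadratic {K : Type*} [Field K] [IsAlgClosed K]
    {n m : ℕ} (e : Fin m → Sym2 (Fin n))
    (he : Function.Injective e) (hl : ∀ i, ¬ (e i).IsDiag)
    (hconn : (SimpleGraph.fromEdgeSet (Set.range e)).Connected)
    (hquad : ∃ S : Set (MvPolynomial (Fin m) K),
      (∀ p ∈ S, ∃ i j k l : Fin m, p = X i * X j - X k * X l) ∧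
      Ideal.span S = toricIdeal K e)
 :
    Cmin e = {E : Set (Fin m) | ∃ u : Fin m →₀ ℕ,
      IndispensableMonomial (toricIdeal K e) u ∧ E = {i | u i ≠ 0}} := by
  obtain ⟨S₀, hS₀quad, hS₀span⟩ := hquad
  have hS₀bin : ∀ p ∈ S₀, IsBinomial p := by
    intro p hp
    obtain ⟨i, j, k, l, rfl⟩ := hS₀quad p hp
    exact ⟨pr i j, pr k l, by rw [X_mul_X_eq, X_mul_X_eq]⟩
  ext E
  simp only [Set.mem_setOf_eq]
  constructor
  · rintro ⟨⟨u, hu, hEcase⟩, hmin⟩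
    have main : ∀ A B : Fin m →₀ ℕ,
        (∀ j, piF e A j = piF e B j) → A ≠ B →
        E = {i | A i ≠ 0} →
        ∃ w : Fin m →₀ ℕ, IndispensableMonomial (toricIdeal K e) w ∧ E = {i | w i ≠ 0} := by
      intro A B hAB hABne hEA
      have hmemI : (monomial A 1 - monomial B 1 : MvPolynomial (Fin m) K)
          ∈ Ideal.span S₀ := by
        rw [hS₀span]
        exact (mem_toricIdeal_iff _ _).mpr hAB
      have hEq := eqvGen_of_mem_span hS₀bin hmemI
      rcases stepAt_of_eqvGen hEq with heq | ⟨⟨p, q, c, hmemS, hpq, hstep⟩, -⟩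
      · exact absurd heq hABne
      have hshape : (∃ a b, p = pr a b) ∧ (∃ cc dd, q = pr cc dd) := by
        rcases hmemS with hmem1 | hmem1
        · obtain ⟨i, j, k, l, hquadeq⟩ := hS₀quad _ hmem1
          exact binomial_pair_shape hpq hquadeq
        · obtain ⟨i, j, k, l, hquadeq⟩ := hS₀quad _ hmem1
          have h2 := binomial_pair_shape hpq.symm hquadeq
          exact ⟨h2.2, h2.1⟩
      obtain ⟨⟨a, b, rfl⟩, ⟨cc, dd, rfl⟩⟩ := hshape
      have hSI : (monomial (pr a b) 1 - monomial (pr cc dd) 1 :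
          MvPolynomial (Fin m) K) ∈ toricIdeal K e := by
        rcases hmemS with hmem1 | hmem1
        · rw [← hS₀span]; exact Ideal.subset_span hmem1
        · have h2 := (toricIdeal K e).neg_mem
            (show (monomial (pr cc dd) 1 - monomial (pr a b) 1 : MvPolynomial (Fin m) K)
              ∈ toricIdeal K e by rw [← hS₀span]; exact Ideal.subset_span hmem1)
          rwa [neg_sub] at h2
      have hπpq := (mem_toricIdeal_iff (K := K) (pr a b) (pr cc dd)).mp hSI
      obtain ⟨hab, -, -, -, -, -⟩ := pair_distinct he hl hπpq hpq
      have hCmin := pair_mem_Cmin' he hl hπpq hpq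
      have hA : ∀ i', A i' = c i' + pr a b i' := fun i' => by rw [hstep]; simp
      have hsubE : ({i | i = a ∨ i = b} : Set (Fin m)) ⊆ E := by
        rw [hEA]
        intro i0 hi0
        simp only [Set.mem_setOf_eq] at hi0 ⊢
        have h2 := hA i0
        have h3 : pr a b i0 ≠ 0 := by
          rw [pr_apply]
          rcases hi0 with rfl | rfl
          · simp
          · simp [Ne.symm hab]
        omega
      have hEeq := hmin _ hCmin.1 hsubE
      refine ⟨pr a b, pair_indispensable he hl hab (fun j => (hπpq j).symm) hpq.symm, ?_⟩
      rw [← hEeq, pr_supp_set hab]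
    have hker : Ker e u := hu.2.1
    rcases hEcase with hE | hE
    · refine main (toNatF u) (toNatF (-u)) (piF_toNatF_eq hker) (toNatF_ne hu.1) ?_
      rw [hE, toNatF_supp_pos]
    · refine main (toNatF (-u)) (toNatF u) (fun j => (piF_toNatF_eq hker j).symm)
        (Ne.symm (toNatF_ne hu.1)) ?_
      rw [hE, toNatF_supp_pos]
      ext i
      simp
  · rintro ⟨w, hw, hEw⟩
    have hS₁bin : ∀ p ∈ S₀ \ {0}, IsBinomial p := fun p hp => hS₀bin p hp.1
    have hS₁span : Ideal.span (S₀ \ {0}) = toricIdeal K e := by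
      rw [span_diff_zero, hS₀span]
    obtain ⟨s, hsS₁, v, hsv⟩ := hw (S₀ \ {0}) hS₁bin hS₁span
    have hs0 : s ≠ 0 := hsS₁.2
    have hsS₀ : s ∈ S₀ := hsS₁.1
    obtain ⟨i, j, k, l, hquadeq⟩ := hS₀quad s hsS₀
    have hwv : w ≠ v := by
      rintro rfl
      rcases hsv with h | h <;> (rw [sub_self] at h; exact hs0 h)
    have hshape : (∃ a b, w = pr a b) ∧ (∃ cc dd, v = pr cc dd) := by
      rcases hsv with h | h
      · exact binomial_pair_shape hwv (by rw [← h]; exact hquadeq)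
      · have h2 := binomial_pair_shape (Ne.symm hwv) (by rw [← h]; exact hquadeq)
        exact ⟨h2.2, h2.1⟩
    obtain ⟨⟨a, b, rfl⟩, ⟨cc, dd, rfl⟩⟩ := hshape
    have hSI : (monomial (pr a b) 1 - monomial (pr cc dd) 1 :
        MvPolynomial (Fin m) K) ∈ toricIdeal K e := by
      rcases hsv with h | h
      · rw [← h, ← hS₁span]; exact Ideal.subset_span hsS₁
      · have h2 := (toricIdeal K e).neg_mem
          (show (monomial (pr cc dd) 1 - monomial (pr a b) 1 : MvPolynomial (Fin m) K)
            ∈ toricIdeal K e by rw [← h, ← hS₁span]; exact Ideal.subset_span hsS₁)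
        rwa [neg_sub] at h2
    have hπpq := (mem_toricIdeal_iff (K := K) (pr a b) (pr cc dd)).mp hSI
    obtain ⟨hab, -, -, -, -, -⟩ := pair_distinct he hl hπpq hwv
    have hCmin := pair_mem_Cmin' he hl hπpq hwv
    rw [hEw, pr_supp_set hab]
    exact hCmin
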